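/- arXiv:1502.00153 — 2 statements merged into one kernel-verified Lean document; each statement's English description precedes it below -/
import Mathlib

section
/- Let X be a compact metric space and g : X → X a continuous map. For every finite open cover λ of X and every n ∈ ℕ, the topological conditional entropy satisfies h(g^n | λ_g^n) ≤ n · h(g | λ), where λ_g^n = { A₀ ∩ g⁻¹(A₁) ∩ ⋯ ∩ g^{-(n-1)}(A_{n-1}) : A₀,…,A_{n-1} ∈ λ }. In particular, if g is h-expansive, then g^n is h-expansive for each n ∈ ℕ. -/
open Set Filter

/-- `ξ` is an open cover of the whole space. -/
def IsOpenCoverOf {X : Type*} [TopologicalSpace X] (ξ : Set (Set X)) : Prop :=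
  (∀ A ∈ ξ, IsOpen A) ∧ ⋃₀ ξ = Set.univ

/-- The join `λ_g^n = ⋁_{k=0}^{n-1} g^{-k}(λ)`, consisting of all sets
`A₀ ∩ g⁻¹(A₁) ∩ ⋯ ∩ g^{-(n-1)}(A_{n-1})` with `A₀, …, A_{n-1} ∈ λ`. -/
def coverJoin {X : Type*} (g : X → X) (n : ℕ) (ξ : Set (Set X)) : Set (Set X) :=
  {B | ∃ A : ℕ → Set X, (∀ k < n, A k ∈ ξ) ∧ B = ⋂ k ∈ Finset.range n, g^[k] ⁻¹' A k}

/-- The minimal number of members of `ξ` needed to cover `B`. -/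
noncomputable def covNum {X : Type*} (ξ : Set (Set X)) (B : Set X) : ℕ :=
  sInf {m : ℕ | ∃ F : Finset (Set X), ↑F ⊆ ξ ∧ F.card = m ∧ B ⊆ ⋃₀ ↑F}

/-- `H(ξ | η)`: the logarithm of the maximal, over `B ∈ η`, minimal number of members
of `ξ` needed to cover a single member `B` of `η`. -/
noncomputable def covH {X : Type*} (ξ η : Set (Set X)) : ℝ :=
  Real.log (sSup ((fun B => (covNum ξ B : ℝ)) '' η))

/-- The topological conditional entropy `h(g | λ)` of `g` given an open cover `λ`:
`h(g | λ) = sup_ξ limsup_{n → ∞} (1/n) H(ξ_g^n | λ_g^n)`, the supremum over all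
open covers `ξ` of the space. -/
noncomputable def topCondEntropy {X : Type*} [TopologicalSpace X] (g : X → X)
    (lam : Set (Set X)) : EReal :=
  ⨆ (ξ : Set (Set X)) (_ : IsOpenCoverOf ξ),
    Filter.limsup
      (fun n : ℕ => ((covH (coverJoin g n ξ) (coverJoin g n lam) / n : ℝ) : EReal))
      Filter.atTop

/-- `g` is h-expansive if there is a finite open cover `λ` with `h(g | λ) = 0`. -/
def HExpansive {X : Type*} [TopologicalSpace X] (g : X → X) : Prop :=
  ∃ lam : Set (Set X), lam.Finite ∧ IsOpenCoverOf lam ∧ topCondEntropy g lam = 0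

section Aux

variable {X : Type*}

lemma covNum_le_card {ξ : Set (Set X)} {B : Set X} {F : Finset (Set X)}
    (hF : ↑F ⊆ ξ) (hcov : B ⊆ ⋃₀ ↑F) : covNum ξ B ≤ F.card :=
  Nat.sInf_le ⟨F, hF, rfl, hcov⟩

/-- If `ξ₁` refines `ξ₂` and `B` has some finite cover from `ξ₁`, then
`covNum ξ₂ B ≤ covNum ξ₁ B`. -/
lemma covNum_refine {ξ₁ ξ₂ : Set (Set X)} {B : Set X}
    (href : ∀ C ∈ ξ₁, ∃ C' ∈ ξ₂, C ⊆ C')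
    (hne : ∃ F : Finset (Set X), ↑F ⊆ ξ₁ ∧ B ⊆ ⋃₀ ↑F) :
    covNum ξ₂ B ≤ covNum ξ₁ B := by
  classical
  obtain ⟨F₀, hF₀, hc₀⟩ := hne
  have hS : {m : ℕ | ∃ F : Finset (Set X), ↑F ⊆ ξ₁ ∧ F.card = m ∧ B ⊆ ⋃₀ ↑F}.Nonempty :=
    ⟨F₀.card, F₀, hF₀, rfl, hc₀⟩
  obtain ⟨F, hF, hcard, hcov⟩ := Nat.sInf_mem hS
  set f : Set X → Set X := fun C => if h : ∃ C' ∈ ξ₂, C ⊆ C' then h.choose else C with hf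
  have hfmem : ∀ C ∈ F, f C ∈ ξ₂ ∧ C ⊆ f C := by
    intro C hC
    have hex : ∃ C' ∈ ξ₂, C ⊆ C' := href C (hF hC)
    simp only [hf, dif_pos hex]
    obtain ⟨h1, h2⟩ := hex.choose_spec
    exact ⟨h1, h2⟩
  have h1 : covNum ξ₂ B ≤ (F.image f).card := by
    apply covNum_le_card
    · intro C hC
      simp only [Finset.coe_image, Set.mem_image, Finset.mem_coe] at hC
      obtain ⟨D, hD, rfl⟩ := hC
      exact (hfmem D hD).1
    · intro x hx
      obtain ⟨C, hC, hxC⟩ := hcov hx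
      simp only [Finset.mem_coe] at hC
      exact ⟨f C, by simp [Finset.mem_image]; exact ⟨C, hC, rfl⟩, (hfmem C hC).2 hxC⟩
  calc covNum ξ₂ B ≤ (F.image f).card := h1
    _ ≤ F.card := Finset.card_image_le
    _ = covNum ξ₁ B := hcard

lemma covH_nonneg (ξ η : Set (Set X)) : 0 ≤ covH ξ η := by
  set S := (fun B => (covNum ξ B : ℝ)) '' η with hS
  by_cases hb : BddAbove S
  · by_cases h1 : ∃ x ∈ S, (1 : ℝ) ≤ x
    · obtain ⟨x, hx, hx1⟩ := h1
      exact Real.log_nonneg (le_trans hx1 (le_csSup hb hx))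
    · push_neg at h1
      have hle : sSup S ≤ 0 := by
        apply Real.sSup_le _ le_rfl
        intro x hx
        have hx1 := h1 _ hx
        obtain ⟨B, hBη, hBx⟩ := hx
        subst hBx
        simp only at hx1 ⊢
        have hz : covNum ξ B = 0 := Nat.lt_one_iff.1 (by exact_mod_cast hx1)
        simp [hz]
      have hge : 0 ≤ sSup S := Real.sSup_nonneg (by rintro x ⟨B, _, rfl⟩; positivity)
      rw [covH, ← hS, le_antisymm hle hge, Real.log_zero]
  · rw [covH, ← hS, Real.sSup_of_not_bddAbove hb, Real.log_zero]

/-- Monotonicity of `covH` in the first cover under pointwise `covNum` comparison,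
given a uniform bound for the bigger side. -/
lemma covH_le {ξ₁ ξ₂ η : Set (Set X)} (K : ℕ)
    (hnum : ∀ B ∈ η, covNum ξ₂ B ≤ covNum ξ₁ B)
    (hK : ∀ B ∈ η, covNum ξ₁ B ≤ K) :
    covH ξ₂ η ≤ covH ξ₁ η := by
  set S₁ := (fun B => (covNum ξ₁ B : ℝ)) '' η with hS₁
  set S₂ := (fun B => (covNum ξ₂ B : ℝ)) '' η with hS₂
  have hb₁ : BddAbove S₁ := by
    refine ⟨(K : ℝ), ?_⟩
    rintro x ⟨B, hB, rfl⟩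
    show ((covNum ξ₁ B : ℝ)) ≤ (K : ℝ)
    exact_mod_cast hK B hB
  have h0₁ : 0 ≤ sSup S₁ := Real.sSup_nonneg (by rintro x ⟨B, _, rfl⟩; positivity)
  have hle : sSup S₂ ≤ sSup S₁ := by
    apply Real.sSup_le _ h0₁
    rintro x ⟨B, hB, rfl⟩
    calc ((covNum ξ₂ B : ℝ)) ≤ (covNum ξ₁ B : ℝ) := by exact_mod_cast hnum B hB
      _ ≤ sSup S₁ := le_csSup hb₁ ⟨B, hB, rfl⟩
  by_cases h1 : (1 : ℝ) ≤ sSup S₂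
  · exact Real.log_le_log (by linarith) hle
  · push_neg at h1
    have h0₂ : 0 ≤ sSup S₂ := Real.sSup_nonneg (by rintro x ⟨B, _, rfl⟩; positivity)
    calc covH ξ₂ η = Real.log (sSup S₂) := rfl
      _ ≤ 0 := Real.log_nonpos h0₂ h1.le
      _ ≤ covH ξ₁ η := covH_nonneg ξ₁ η

lemma exists_finset_subcover [TopologicalSpace X] [CompactSpace X] {ξ : Set (Set X)}
    (h : IsOpenCoverOf ξ) :
    ∃ F : Finset (Set X), ↑F ⊆ ξ ∧ (Set.univ : Set X) ⊆ ⋃₀ ↑F := by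
  obtain ⟨b', hb'sub, hb'fin, hcov⟩ := IsCompact.elim_finite_subcover_image
    (isCompact_univ (X := X)) (fun S hS => h.1 S hS)
    (by rw [← Set.sUnion_eq_biUnion, h.2])
  refine ⟨hb'fin.toFinset, by simpa using hb'sub, ?_⟩
  rw [Set.sUnion_eq_biUnion]
  simpa using hcov

lemma coverJoin_isOpenCoverOf [TopologicalSpace X] {g : X → X} (hg : Continuous g)
    {ξ : Set (Set X)} (h : IsOpenCoverOf ξ) (N : ℕ) : IsOpenCoverOf (coverJoin g N ξ) := by
  constructor
  · rintro B ⟨A, hA, rfl⟩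
    apply isOpen_biInter_finset
    intro k hk
    exact (h.1 _ (hA k (Finset.mem_range.1 hk))).preimage (hg.iterate k)
  · rw [Set.eq_univ_iff_forall]
    intro x
    have hch : ∀ y : X, ∃ S, S ∈ ξ ∧ y ∈ S := by
      intro y
      have : y ∈ ⋃₀ ξ := h.2 ▸ Set.mem_univ y
      exact this
    choose f hf1 hf2 using hch
    refine ⟨⋂ k ∈ Finset.range N, g^[k] ⁻¹' f (g^[k] x),
      ⟨fun k => f (g^[k] x), fun k _ => hf1 _, rfl⟩, ?_⟩
    simp only [Set.mem_iInter, Set.mem_preimage]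
    intro k _
    exact hf2 _

lemma coverJoin_finite (g : X → X) (N : ℕ) {lam : Set (Set X)} (h : lam.Finite) :
    (coverJoin g N lam).Finite := by
  classical
  set φ : (Fin N → Set X) → Set X :=
    fun f => ⋂ k ∈ Finset.range N, g^[k] ⁻¹' (if hk : k < N then f ⟨k, hk⟩ else ∅) with hφ
  apply Set.Finite.subset ((Set.Finite.pi (fun _ : Fin N => h)).image φ)
  rintro B ⟨A, hA, rfl⟩
  refine ⟨fun k : Fin N => A k, by intro k _; exact hA k k.2, ?_⟩
  simp only [hφ]
  refine Set.iInter₂_congr fun k hk => ?_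
  rw [dif_pos (Finset.mem_range.1 hk)]

/-- `λ_{g^n}^m` over `g^n`, with `λ = ξ_g^n`, equals `ξ_g^{nm}`. -/
lemma coverJoin_iterate (g : X → X) {n : ℕ} (hn : 0 < n) (m : ℕ) (ξ : Set (Set X)) :
    coverJoin (g^[n]) m (coverJoin g n ξ) = coverJoin g (n * m) ξ := by
  classical
  ext B
  constructor
  · rintro ⟨A, hA, rfl⟩
    set C : ℕ → ℕ → Set X := fun j =>
      if h : A j ∈ coverJoin g n ξ then h.choose else fun _ => ∅ with hC
    have hC1 : ∀ j < m, ∀ k < n, C j k ∈ ξ := by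
      intro j hj k hk
      have hmem := hA j hj
      simp only [hC, dif_pos hmem]
      exact hmem.choose_spec.1 k hk
    have hC2 : ∀ j < m, A j = ⋂ k ∈ Finset.range n, g^[k] ⁻¹' C j k := by
      intro j hj
      have hmem := hA j hj
      simp only [hC, dif_pos hmem]
      exact hmem.choose_spec.2
    refine ⟨fun i => C (i / n) (i % n), ?_, ?_⟩
    · intro i hi
      exact hC1 (i / n) ((Nat.div_lt_iff_lt_mul hn).2 (by rwa [mul_comm] at hi))
        (i % n) (Nat.mod_lt _ hn)
    · ext x
      simp only [Set.mem_iInter, Finset.mem_range, Set.mem_preimage]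
      constructor
      · intro hx i hi
        have hj : i / n < m := (Nat.div_lt_iff_lt_mul hn).2 (by rwa [mul_comm] at hi)
        have h1 := hx (i / n) hj
        rw [hC2 _ hj] at h1
        simp only [Set.mem_iInter, Finset.mem_range, Set.mem_preimage] at h1
        have h2 := h1 (i % n) (Nat.mod_lt _ hn)
        rwa [← Function.iterate_mul, ← Function.iterate_add_apply, Nat.mod_add_div] at h2
      · intro hx j hj
        rw [hC2 _ hj]
        simp only [Set.mem_iInter, Finset.mem_range, Set.mem_preimage]
        intro k hk
        have hi : k + n * j < n * m := by
          calc k + n * j < n + n * j := by omega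
            _ = n * (j + 1) := by ring
            _ ≤ n * m := Nat.mul_le_mul_left n hj
        have h1 := hx (k + n * j) hi
        rw [Nat.add_mul_div_left _ _ hn, Nat.div_eq_of_lt hk, zero_add,
          Nat.add_mul_mod_self_left, Nat.mod_eq_of_lt hk] at h1
        rwa [Function.iterate_add_apply, Function.iterate_mul] at h1
  · rintro ⟨D, hD, rfl⟩
    refine ⟨fun j => ⋂ k ∈ Finset.range n, g^[k] ⁻¹' D (k + n * j), ?_, ?_⟩
    · intro j hj
      refine ⟨fun k => D (k + n * j), fun k hk => hD _ ?_, rfl⟩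
      calc k + n * j < n + n * j := by omega
        _ = n * (j + 1) := by ring
        _ ≤ n * m := Nat.mul_le_mul_left n hj
    · ext x
      simp only [Set.mem_iInter, Finset.mem_range, Set.mem_preimage]
      constructor
      · intro hx j hj k hk
        have hi : k + n * j < n * m := by
          calc k + n * j < n + n * j := by omega
            _ = n * (j + 1) := by ring
            _ ≤ n * m := Nat.mul_le_mul_left n hj
        have h1 := hx (k + n * j) hi
        rwa [Function.iterate_add_apply, Function.iterate_mul] at h1
      · intro hx i hi
        have hj : i / n < m := (Nat.div_lt_iff_lt_mul hn).2 (by rwa [mul_comm] at hi)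
        have h1 := hx (i / n) hj (i % n) (Nat.mod_lt _ hn)
        rwa [← Function.iterate_mul, ← Function.iterate_add_apply, Nat.mod_add_div] at h1

/-- Every member of `ξ_g^{nm}` is contained in a member of `ξ_{g^n}^m`. -/
lemma coverJoin_mul_refines (g : X → X) {n : ℕ} (hn : 0 < n) (m : ℕ) (ξ : Set (Set X)) :
    ∀ C ∈ coverJoin g (n * m) ξ, ∃ C' ∈ coverJoin (g^[n]) m ξ, C ⊆ C' := by
  rintro C ⟨D, hD, rfl⟩
  refine ⟨⋂ j ∈ Finset.range m, (g^[n])^[j] ⁻¹' D (n * j),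
    ⟨fun j => D (n * j), fun j hj => hD _ ?_, rfl⟩, ?_⟩
  · exact (Nat.mul_lt_mul_left hn).2 hj
  · intro x hx
    simp only [Set.mem_iInter, Finset.mem_range, Set.mem_preimage] at hx ⊢
    intro j hj
    have := hx (n * j) ((Nat.mul_lt_mul_left hn).2 hj)
    rwa [Function.iterate_mul] at this

lemma topCondEntropy_nonneg [TopologicalSpace X] (g : X → X) (lam : Set (Set X)) :
    0 ≤ topCondEntropy g lam := by
  have hξ : IsOpenCoverOf ({Set.univ} : Set (Set X)) := ⟨by simp, by simp⟩
  refine le_trans ?_ (le_iSup₂ (f := fun ξ (_ : IsOpenCoverOf ξ) =>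
    Filter.limsup (fun n : ℕ =>
      ((covH (coverJoin g n ξ) (coverJoin g n lam) / n : ℝ) : EReal)) Filter.atTop)
    ({Set.univ} : Set (Set X)) hξ)
  exact le_limsup_of_frequently_le (Frequently.of_forall fun m =>
    EReal.coe_nonneg.2 (div_nonneg (covH_nonneg _ _) (Nat.cast_nonneg m)))

lemma limsup_subseq_le (u : ℕ → EReal) (s : ℕ → ℕ) (hs : Tendsto s atTop atTop) :
    Filter.limsup (fun m => u (s m)) Filter.atTop ≤ Filter.limsup u Filter.atTop := by
  have h1 : Filter.limsup (fun m => u (s m)) Filter.atTop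
      = Filter.limsup u (Filter.map s Filter.atTop) := by
    rw [Filter.limsup, Filter.limsup, Filter.map_map]
    rfl
  rw [h1]
  exact Filter.limsup_le_limsup_of_le hs

lemma limsup_coe_mul_le {v : ℕ → ℝ} {r K : ℝ} (hr : 0 < r)
    (h : Filter.limsup (fun m => ((v m : ℝ) : EReal)) Filter.atTop ≤ (K : EReal)) :
    Filter.limsup (fun m => ((r * v m : ℝ) : EReal)) Filter.atTop ≤ ((r * K : ℝ) : EReal) := by
  by_contra hlt
  push_neg at hlt
  obtain ⟨c, hc1, hc2⟩ := EReal.lt_iff_exists_real_btwn.1 hlt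
  have hKb : K < c / r := by
    have : r * K < c := EReal.coe_lt_coe_iff.1 hc1
    rw [lt_div_iff₀ hr, mul_comm]
    linarith
  have hev : ∀ᶠ m in Filter.atTop, ((v m : ℝ) : EReal) < ((c / r : ℝ) : EReal) :=
    Filter.eventually_lt_of_limsup_lt (lt_of_le_of_lt h (EReal.coe_lt_coe_iff.2 hKb))
  have hev2 : ∀ᶠ m in Filter.atTop, ((r * v m : ℝ) : EReal) ≤ (c : EReal) := by
    filter_upwards [hev] with m hm
    have h1 : v m < c / r := EReal.coe_lt_coe_iff.1 hm
    have h2 : r * v m ≤ c := by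
      have h3 := mul_lt_mul_of_pos_left h1 hr
      rw [mul_div_cancel₀ c hr.ne'] at h3
      linarith
    exact EReal.coe_le_coe_iff.2 h2
  have hbound : Filter.limsup (fun m => ((r * v m : ℝ) : EReal)) Filter.atTop ≤ (c : EReal) :=
    Filter.limsup_le_of_le (by isBoundedDefault) hev2
  exact absurd (lt_of_lt_of_le hc2 hbound) (lt_irrefl _)

lemma main_ineq {X : Type*} [TopologicalSpace X] [CompactSpace X] (g : X → X)
    (hg : Continuous g) (lam : Set (Set X)) (hlamCov : IsOpenCoverOf lam)
    {n : ℕ} (hn : 0 < n) :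
    topCondEntropy (g^[n]) (coverJoin g n lam) ≤ (n : EReal) * topCondEntropy g lam := by
  rcases eq_top_or_lt_top (topCondEntropy g lam) with htop | hfin
  · rw [htop, EReal.mul_top_of_pos (by exact_mod_cast hn)]
    exact le_top
  · have h0 : 0 ≤ topCondEntropy g lam := topCondEntropy_nonneg g lam
    have hbot : topCondEntropy g lam ≠ ⊥ := fun hb => by simp [hb] at h0
    have hcoe : ((topCondEntropy g lam).toReal : EReal) = topCondEntropy g lam :=
      EReal.coe_toReal hfin.ne hbot
    set h' := (topCondEntropy g lam).toReal with hh'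
    rw [topCondEntropy]
    apply iSup₂_le
    intro ξ hξ
    set a : ℕ → ℝ := fun N => covH (coverJoin g N ξ) (coverJoin g N lam) / N with ha
    have hL : Filter.limsup (fun N => ((a N : ℝ) : EReal)) Filter.atTop
        ≤ topCondEntropy g lam := by
      exact le_iSup₂ (f := fun ξ (_ : IsOpenCoverOf ξ) =>
        Filter.limsup (fun N : ℕ =>
          ((covH (coverJoin g N ξ) (coverJoin g N lam) / N : ℝ) : EReal)) Filter.atTop) ξ hξ
    have hsub : Filter.limsup (fun m => ((a (n * m) : ℝ) : EReal)) Filter.atTop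
        ≤ (h' : EReal) := by
      rw [hcoe]
      refine le_trans (limsup_subseq_le (fun N => ((a N : ℝ) : EReal)) (fun m => n * m) ?_) hL
      exact Filter.tendsto_atTop_mono (fun m => Nat.le_mul_of_pos_left m hn) Filter.tendsto_id
    -- pointwise comparison
    have hpt : ∀ m : ℕ,
        (covH (coverJoin (g^[n]) m ξ) (coverJoin (g^[n]) m (coverJoin g n lam)) / m : ℝ)
          ≤ (n : ℝ) * a (n * m) := by
      intro m
      rw [coverJoin_iterate g hn m lam]
      obtain ⟨F, hF, hFc⟩ := exists_finset_subcover (coverJoin_isOpenCoverOf hg hξ (n * m))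
      have hcomp : covH (coverJoin (g^[n]) m ξ) (coverJoin g (n * m) lam)
          ≤ covH (coverJoin g (n * m) ξ) (coverJoin g (n * m) lam) := by
        apply covH_le F.card
        · intro B _
          exact covNum_refine (coverJoin_mul_refines g hn m ξ)
            ⟨F, hF, (Set.subset_univ B).trans hFc⟩
        · intro B _
          exact covNum_le_card hF ((Set.subset_univ B).trans hFc)
      have e1 : (n : ℝ) * a (n * m)
          = covH (coverJoin g (n * m) ξ) (coverJoin g (n * m) lam) / m := by
        rw [ha]
        simp only
        rw [Nat.cast_mul, ← mul_div_assoc,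
          show ((n : ℝ) * covH (coverJoin g (n * m) ξ) (coverJoin g (n * m) lam))
            / ((n : ℝ) * m) = covH (coverJoin g (n * m) ξ) (coverJoin g (n * m) lam) / m from
            mul_div_mul_left _ _ (by exact_mod_cast hn.ne')]
      rw [e1, div_eq_mul_inv, div_eq_mul_inv]
      exact mul_le_mul_of_nonneg_right hcomp (by positivity)
    have hlim1 : Filter.limsup (fun m : ℕ =>
        ((covH (coverJoin (g^[n]) m ξ) (coverJoin (g^[n]) m (coverJoin g n lam)) / m : ℝ)
          : EReal)) Filter.atTop
        ≤ Filter.limsup (fun m => (((n : ℝ) * a (n * m) : ℝ) : EReal)) Filter.atTop := by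
      exact Filter.limsup_le_limsup
        (Filter.Eventually.of_forall fun m => EReal.coe_le_coe_iff.2 (hpt m))
    have hlim2 : Filter.limsup (fun m => (((n : ℝ) * a (n * m) : ℝ) : EReal)) Filter.atTop
        ≤ (((n : ℝ) * h' : ℝ) : EReal) :=
      limsup_coe_mul_le (by exact_mod_cast hn) hsub
    refine le_trans hlim1 (le_trans hlim2 ?_)
    rw [EReal.coe_mul, hcoe, EReal.coe_coe_eq_natCast]

end Aux

/-- Let `X` be a compact metric space and `g : X → X` continuous. For every finite open
cover `λ` of `X` and every `n ∈ ℕ = {1, 2, …}`, we have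
`h(g^n | λ_g^n) ≤ n ⬝ h(g | λ)`. In particular, if `g` is h-expansive, then so is `g^n`. -/
theorem hExpansive_iterate {X : Type*} [MetricSpace X] [CompactSpace X]
    (g : X → X) (hg : Continuous g)
    (lam : Set (Set X)) (hlamFin : lam.Finite) (hlamCov : IsOpenCoverOf lam)
    (n : ℕ) (hn : 0 < n) :
    topCondEntropy (g^[n]) (coverJoin g n lam) ≤ (n : EReal) * topCondEntropy g lam ∧
      (HExpansive g → HExpansive (g^[n])) := by
  constructor
  · exact main_ineq g hg lam hlamCov hn
  · rintro ⟨lam', hfin', hcov', hzero'⟩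
    refine ⟨coverJoin g n lam', coverJoin_finite g n hfin',
      coverJoin_isOpenCoverOf hg hcov' n, le_antisymm ?_ (topCondEntropy_nonneg _ _)⟩
    calc topCondEntropy (g^[n]) (coverJoin g n lam')
        ≤ (n : EReal) * topCondEntropy g lam' := main_ineq g hg lam' hcov' hn
      _ = 0 := by rw [hzero', mul_zero]
end

section
/- Let (X,d) be a compact metric space and f : X → X a continuous map. Let C be the set of points x ∈ X such that f is not injective on any neighborhood of x, and assume C ≠ ∅ and C ≠ X. Then there exist a number δ₀ ∈ (0,1] and a function τ : (0,δ₀] → (0,+∞) with the following properties: (i) τ(δ) → 0 as δ → 0⁺; (ii) for each δ ∈ (0,δ₀] and each x ∈ X with d(x,C) ≥ τ(δ), the restriction of f to the open ball B_d(x,δ) is injective. (Uniform local injectivity away from the set of non-locally-injective points; for an expanding Thurston map this set C is exactly the set of critical points.) -/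
open Set Metric Filter

/-- The set of points at which `f` is not injective on any neighborhood. -/
def nonLocInjSet {X : Type*} [TopologicalSpace X] (f : X → X) : Set X :=
  {x : X | ∀ U ∈ nhds x, ¬ Set.InjOn f U}

lemma key_inj {X : Type*} [MetricSpace X] [CompactSpace X]
    (f : X → X) {ε : ℝ} (hε : 0 < ε) :
    ∃ δ > 0, ∀ x : X, ε ≤ Metric.infDist x (nonLocInjSet f) →
      Set.InjOn f (Metric.ball x δ) := by
  classical
  set C := nonLocInjSet f with hC
  set K : Set X := {x | ε ≤ infDist x C} with hK
  have hKc : IsCompact K :=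
    (isClosed_le continuous_const (continuous_infDist_pt C)).isCompact
  have hxC : ∀ x ∈ K, ∃ s > 0, Set.InjOn f (ball x s) := by
    intro x hx
    by_contra h
    push_neg at h
    have hxmem : x ∈ C := by
      intro U hU hinjU
      obtain ⟨s, hs, hsub⟩ := Metric.mem_nhds_iff.1 hU
      exact h s hs (hinjU.mono hsub)
    have h0 : infDist x C = 0 := infDist_zero_of_mem hxmem
    have : ε ≤ (0:ℝ) := h0 ▸ hx
    linarith
  choose! s hs hinj using hxC
  obtain ⟨δ, hδ, hcov⟩ :=
    lebesgue_number_lemma_of_metric hKc (c := fun x : K => ball (x : X) (s x))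
      (fun _ => isOpen_ball) (fun y hy => mem_iUnion.2 ⟨⟨y, hy⟩, mem_ball_self (hs y hy)⟩)
  refine ⟨δ, hδ, fun x hx => ?_⟩
  obtain ⟨i, hi⟩ := hcov x hx
  exact (hinj i i.2).mono hi

/-- Uniform local injectivity away from the set `C` of non-locally-injective points:
for a continuous map `f` on a compact metric space `X`, with `C ≠ ∅` and `C ≠ X`,
there exist `δ₀ ∈ (0,1]` and `τ : (0,δ₀] → (0,∞)` such that `τ(δ) → 0` as `δ → 0⁺`
and, for each `δ ∈ (0,δ₀]`, the map `f` is injective on every open ball of radius `δ`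
centered at a point `x` with `d(x, C) ≥ τ(δ)`. -/
theorem uniform_local_injectivity {X : Type*} [MetricSpace X] [CompactSpace X]
    (f : X → X) (hf : Continuous f)
    (hCne : (nonLocInjSet f).Nonempty) (hCtop : nonLocInjSet f ≠ Set.univ) :
    ∃ δ₀ ∈ Set.Ioc (0 : ℝ) 1, ∃ τ : ℝ → ℝ,
      (∀ δ ∈ Set.Ioc (0 : ℝ) δ₀, 0 < τ δ) ∧
      Filter.Tendsto τ (nhdsWithin 0 (Set.Ioi 0)) (nhds 0) ∧
      (∀ δ ∈ Set.Ioc (0 : ℝ) δ₀, ∀ x : X,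
        τ δ ≤ Metric.infDist x (nonLocInjSet f) → Set.InjOn f (Metric.ball x δ)) := by
  classical
  have hD : ∀ n : ℕ, ∃ δ > 0, ∀ x : X,
      1/(n+1:ℝ) ≤ infDist x (nonLocInjSet f) → Set.InjOn f (ball x δ) :=
    fun n => key_inj f (by positivity)
  choose D hDpos hDinj using hD
  set δs : ℕ → ℝ := fun n =>
    min (1/(n+1:ℝ)) ((Finset.range (n+1)).inf' (by simp) D) with hδs
  have hpos : ∀ n, 0 < δs n := by
    intro n
    refine lt_min (by positivity) ?_
    rw [Finset.lt_inf'_iff]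
    exact fun k _ => hDpos k
  have hanti : Antitone δs := by
    intro a b hab
    refine min_le_min ?_ ?_
    · apply one_div_le_one_div_of_le (by positivity)
      have : (a:ℝ) ≤ b := by exact_mod_cast hab
      linarith
    · refine Finset.le_inf' _ _ fun k hk => Finset.inf'_le _ ?_
      simp only [Finset.mem_range] at hk ⊢
      omega
  have hle : ∀ n, δs n ≤ 1/(n+1:ℝ) := fun n => min_le_left _ _
  have hinj : ∀ n : ℕ, ∀ x : X, 1/(n+1:ℝ) ≤ infDist x (nonLocInjSet f) →
      Set.InjOn f (ball x (δs n)) := by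
    intro n x hx
    refine (hDinj n x hx).mono (ball_subset_ball ?_)
    exact le_trans (min_le_right _ _) (Finset.inf'_le _ (by simp))
  have hex : ∀ d : ℝ, 0 < d → ∃ n, δs n < d := by
    intro d hd
    obtain ⟨n, hn⟩ := exists_nat_one_div_lt hd
    exact ⟨n, lt_of_le_of_lt (hle n) (by exact_mod_cast hn)⟩
  refine ⟨δs 0, ⟨hpos 0, by simpa using hle 0⟩,
    fun d => if h : ∃ n, δs n < d then 1/(Nat.find h : ℝ) else 1, ?_, ?_, ?_⟩
  · intro d hd
    simp only [dif_pos (hex d hd.1)]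
    have hN : 0 < Nat.find (hex d hd.1) :=
      Nat.pos_of_ne_zero fun h0 => absurd (h0 ▸ Nat.find_spec (hex d hd.1))
        (not_lt.2 hd.2)
    positivity
  · rw [Metric.tendsto_nhdsWithin_nhds]
    intro ε hε
    obtain ⟨m, hm⟩ := exists_nat_one_div_lt hε
    refine ⟨δs m, hpos m, fun d hd hdist => ?_⟩
    have hd0 : (0:ℝ) < d := hd
    rw [Real.dist_eq, sub_zero, abs_of_pos hd0] at hdist
    simp only [dif_pos (hex d hd0)]
    set N := Nat.find (hex d hd0) with hNdef
    have hmN : m < N := by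
      by_contra hc
      push_neg at hc
      have h1 := hanti hc
      have h2 := Nat.find_spec (hex d hd0)
      rw [← hNdef] at h2
      linarith
    have h1 : (1:ℝ)/N ≤ 1/(m+1:ℝ) := by
      apply one_div_le_one_div_of_le (by positivity)
      exact_mod_cast hmN
    have h0 : (0:ℝ) ≤ 1/(N:ℝ) := by positivity
    rw [Real.dist_eq, sub_zero, abs_of_nonneg h0]
    linarith
  · intro d hd x hx
    simp only [dif_pos (hex d hd.1)] at hx
    set N := Nat.find (hex d hd.1) with hNdef
    have hN : 0 < N :=
      Nat.pos_of_ne_zero fun h0 => absurd (h0 ▸ Nat.find_spec (hex d hd.1))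
        (not_lt.2 hd.2)
    have hdle : d ≤ δs (N-1) := not_lt.1 (Nat.find_min (hex d hd.1) (by omega))
    have hcast : ((N-1:ℕ):ℝ)+1 = (N:ℝ) := by
      have : (N-1)+1 = N := Nat.succ_pred_eq_of_pos hN
      exact_mod_cast this
    have h2 := hinj (N-1) x (by rw [hcast]; exact hx)
    exact h2.mono (ball_subset_ball hdle)
end
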